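/- arXiv:1902.02748 — 3 statements merged into one kernel-verified Lean document; each statement's English description precedes it below -/
import Mathlib

section
/- Let P(e,f,g,h) = efg + efh + egh + fgh + fg over GF(2), and fix a function Z : GF(2)^4 -> GF(2) of (e,f,g,h). Then P(f,g,h, Z(e,f,g,h)+e) = P(e,f,g,h) holds for all e,f,g,h in GF(2) if and only if Z(e,f,g,h)*(fg+fh+gh) = fg + gh for all e,f,g,h in GF(2). -/
/-- P(e,f,g,h) = efg + efh + egh + fgh + fg over GF(2). -/
def P1 (e f g h : ZMod 2) : ZMod 2 :=
  e*f*g + e*f*h + e*g*h + f*g*h + f*g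

theorem stmt_1 (Z : ZMod 2 → ZMod 2 → ZMod 2 → ZMod 2 → ZMod 2) :
    (∀ e f g h : ZMod 2, P1 f g h (Z e f g h + e) = P1 e f g h) ↔
      (∀ e f g h : ZMod 2, Z e f g h * (f*g + f*h + g*h) = f*g + g*h) := by
  constructor <;> intro H e f g h <;>
    · have h1 := H e f g h
      clear H
      revert h1
      unfold P1
      generalize Z e f g h = z
      revert e f g h z
      decide
end

section
/- Let P(a,b,c,d,e,f,g,h) = a+b+c+ac+d+bd+e+ce+f+df+g+ag+eg+h+bh+fh over GF(2). Then for all a,...,h,F,Z in GF(2): P(b,c,d,F+e,f,g,h,F+Z+a) + P(a,b,c,d,e,f,g,h) = Z*(1+c+g). Consequently, if Z is any value with Z*(1+c+g)=0, then P is invariant under the substitution (a,b,c,d,e,f,g,h) -> (b,c,d,F+e,f,g,h,F+Z+a), for every value of F. -/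
/-- The invariant P = a+b+c+ac+d+bd+e+ce+f+df+g+ag+eg+h+bh+fh over GF(2). -/
def P3 (a b c d e f g h : ZMod 2) : ZMod 2 :=
  a + b + c + a*c + d + b*d + e + c*e + f + d*f + g + a*g + e*g + h + b*h + f*h

theorem stmt_3 :
    (∀ a b c d e f g h F Z : ZMod 2,
      P3 b c d (F + e) f g h (F + Z + a) + P3 a b c d e f g h = Z * (1 + c + g)) ∧
    (∀ a b c d e f g h F Z : ZMod 2, Z * (1 + c + g) = 0 →
      P3 b c d (F + e) f g h (F + Z + a) = P3 a b c d e f g h) := by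
  have key : ∀ a b c d e f g h F Z : ZMod 2,
      P3 b c d (F + e) f g h (F + Z + a) + P3 a b c d e f g h = Z * (1 + c + g) := by
    decide
  exact ⟨key, fun a b c d e f g h F Z hZ => by
    have := key a b c d e f g h F Z
    rw [hZ] at this
    have h2 : ∀ x y : ZMod 2, x + y = 0 → x = y := by decide
    exact h2 _ _ this⟩
end

section
/- Let P(e,f,g,h,m,n,o,p) = eg+fh+eo+fp+gm+hn+mo+np over GF(2). Then (1) P = (e+m)(g+o) + (f+n)(h+p) as polynomials over GF(2), and (2) the number of points x in GF(2)^8 with P(x) = 0 is exactly 160. -/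
set_option maxRecDepth 10000


/-- P(e,f,g,h,m,n,o,p) = eg+fh+eo+fp+gm+hn+mo+np over GF(2). -/
def P9 (e f g h m n o p : ZMod 2) : ZMod 2 :=
  e*g + f*h + e*o + f*p + g*m + h*n + m*o + n*p

theorem stmt_9 :
    (∀ e f g h m n o p : ZMod 2,
      P9 e f g h m n o p = (e + m) * (g + o) + (f + n) * (h + p)) ∧
    Nat.card {x : Fin 8 → ZMod 2 //
      P9 (x 0) (x 1) (x 2) (x 3) (x 4) (x 5) (x 6) (x 7) = 0} = 160 := by
  constructor
  · intro e f g h m n o p; unfold P9; ring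
  · rw [Nat.card_eq_fintype_card]
    decide
end
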